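/- Fix generalized Riemann differences 𝒜 of order m and ℬ of order n with m > n. Let K be the subfield of ℝ generated over ℚ by all nodes a_i of 𝒜 and b_i of ℬ, and define f(x) = x^m if x ∈ K and f(x) = 0 otherwise. Then the ℬ-derivative of f at 0 exists and equals 0, but the 𝒜-derivative of f at 0 does not exist; moreover f is Lebesgue measurable. -/

import Mathlib

open Filter Finset

/-- The subring closure of a countable set of reals is countable. -/
lemma countable_subring_closure {s : Set ℝ} (hs : s.Countable) :
    (Subring.closure s : Set ℝ).Countable := by
  haveI := hs.to_subtype
  haveI : Countable (MvPolynomial s ℤ) := by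
    unfold MvPolynomial
    exact Function.Injective.countable AddMonoidAlgebra.coeff_injective
  have h1 : (Subring.closure s : Set ℝ) = (Algebra.adjoin ℤ s : Set ℝ) := by
    rw [Algebra.adjoin_int]
    rfl
  rw [h1, Algebra.adjoin_eq_range]
  refine (Set.countable_range fun pl : MvPolynomial s ℤ =>
      MvPolynomial.aeval ((↑) : s → ℝ) pl).mono ?_
  rintro x hx
  obtain ⟨pl, hpl⟩ := hx
  exact ⟨pl, hpl⟩

/-- The subfield closure of a countable set of reals is countable. -/
lemma countable_subfield_closure {s : Set ℝ} (hs : s.Countable) :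
    (Subfield.closure s : Set ℝ).Countable := by
  have hT : (Subring.closure s : Set ℝ).Countable := countable_subring_closure hs
  have : (Subfield.closure s : Set ℝ) ⊆
      (fun yz : ℝ × ℝ => yz.1 / yz.2) ''
        ((Subring.closure s : Set ℝ) ×ˢ (Subring.closure s : Set ℝ)) := by
    intro x hx
    rw [SetLike.mem_coe, Subfield.mem_closure_iff] at hx
    obtain ⟨y, hy, z, hz, hyz⟩ := hx
    exact ⟨(y, z), ⟨hy, hz⟩, hyz⟩
  exact Set.Countable.mono this ((hT.prod hT).image _)

open scoped Classical in
theorem stmt_10 (m n : ℕ) (hmn : n < m)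
    (p q : ℕ) (A a : Fin p → ℝ) (ha : Function.Injective a)
    (B b : Fin q → ℝ) (hb : Function.Injective b)
    (hVA : ∀ j ≤ m, ∑ i, A i * a i ^ j = if j = m then ((Nat.factorial m : ℕ) : ℝ) else 0)
    (hVB : ∀ j ≤ n, ∑ i, B i * b i ^ j = if j = n then ((Nat.factorial n : ℕ) : ℝ) else 0)
    (K : Subfield ℝ) (hK : K = Subfield.closure (Set.range a ∪ Set.range b))
    (f : ℝ → ℝ) (hf : ∀ x : ℝ, f x = if x ∈ K then x ^ m else 0) :
    Tendsto (fun h : ℝ => (∑ i, B i * f (b i * h)) / h ^ n)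
        (nhdsWithin 0 {0}ᶜ) (nhds 0)
    ∧ (¬ ∃ L : ℝ, Tendsto (fun h : ℝ => (∑ i, A i * f (a i * h)) / h ^ m)
        (nhdsWithin 0 {0}ᶜ) (nhds L))
    ∧ Measurable f := by
  have hm0 : m ≠ 0 := by omega
  -- membership of nodes
  have haK : ∀ i, a i ∈ K := fun i => by
    rw [hK]; exact Subfield.subset_closure (Or.inl ⟨i, rfl⟩)
  have hbK : ∀ i, b i ∈ K := fun i => by
    rw [hK]; exact Subfield.subset_closure (Or.inr ⟨i, rfl⟩)
  -- K is countable
  have hKc : (K : Set ℝ).Countable := by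
    rw [hK]
    exact countable_subfield_closure
      ((Set.countable_range a).union (Set.countable_range b))
  -- value of the sums
  have key : ∀ (r : ℕ) (C c : Fin r → ℝ), (∀ i, c i ∈ K) → ∀ h : ℝ,
      (∑ i, C i * f (c i * h)) = if h ∈ K then (∑ i, C i * c i ^ m) * h ^ m else 0 := by
    intro r C c hc h
    split_ifs with hh
    · rw [Finset.sum_mul]
      refine Finset.sum_congr rfl fun i _ => ?_
      rw [hf, if_pos (K.mul_mem (hc i) hh), mul_pow]
      ring
    · refine Finset.sum_eq_zero fun i _ => ?_
      rcases eq_or_ne (c i) 0 with h0 | h0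
      · rw [h0, zero_mul, hf]
        simp [zero_pow hm0]
      · have : c i * h ∉ K := by
          intro hmem
          exact hh (by simpa [h0] using K.mul_mem (K.inv_mem (hc i)) hmem)
        rw [hf, if_neg this, mul_zero]
    -- done
  refine ⟨?_, ?_, ?_⟩
  · -- B-derivative exists and is 0
    set C : ℝ := ∑ i, B i * b i ^ m with hC
    have hle : ∀ᶠ h : ℝ in nhdsWithin 0 {0}ᶜ,
        ‖(∑ i, B i * f (b i * h)) / h ^ n‖ ≤ |C| * ‖h‖ ^ (m - n) := by
      filter_upwards [self_mem_nhdsWithin] with h hh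
      have hne : h ≠ 0 := hh
      rw [key q B b hbK h]
      split_ifs with hmem
      · have : C * h ^ m / h ^ n = C * h ^ (m - n) := by
          rw [pow_sub₀ h hne hmn.le]
          field_simp
        rw [this, norm_mul, norm_pow]
        simp [abs_mul, Real.norm_eq_abs]
      · simp [zero_div]
        positivity
    have hlim : Tendsto (fun h : ℝ => |C| * ‖h‖ ^ (m - n)) (nhdsWithin 0 {0}ᶜ) (nhds 0) := by
      have hcont : Continuous fun h : ℝ => |C| * ‖h‖ ^ (m - n) :=
        continuous_const.mul (continuous_norm.pow _)
      have := hcont.tendsto 0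
      have h0 : |C| * ‖(0 : ℝ)‖ ^ (m - n) = 0 := by
        rw [norm_zero, zero_pow (by omega), mul_zero]
      rw [h0] at this
      exact this.mono_left nhdsWithin_le_nhds
    exact squeeze_zero_norm' hle hlim
  · -- A-derivative does not exist
    rintro ⟨L, hL⟩
    have hsum : (∑ i, A i * a i ^ m) = (Nat.factorial m : ℝ) := by
      have := hVA m le_rfl
      simpa using this
    -- along K \ {0}, the quotient is m!
    have hne1 : (nhdsWithin (0 : ℝ) ((K : Set ℝ) ∩ {0}ᶜ)).NeBot := by
      rw [← mem_closure_iff_nhdsWithin_neBot]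
      have : Tendsto (fun k : ℕ => ((k : ℝ) + 1)⁻¹) atTop (nhds 0) :=
        tendsto_one_div_add_atTop_nhds_zero_nat.congr (by intro k; rw [one_div])
      refine mem_closure_of_tendsto this (Filter.Eventually.of_forall fun k => ?_)
      constructor
      · exact K.inv_mem (K.add_mem (natCast_mem K k) K.one_mem)
      · simp only [Set.mem_compl_iff, Set.mem_singleton_iff]
        positivity
    have hne2 : (nhdsWithin (0 : ℝ) ((K : Set ℝ)ᶜ)).NeBot := by
      rw [← mem_closure_iff_nhdsWithin_neBot]
      exact (hKc.dense_compl ℝ) 0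
    have hL1 : L = (Nat.factorial m : ℝ) := by
      have hmono : Tendsto (fun h : ℝ => (∑ i, A i * f (a i * h)) / h ^ m)
          (nhdsWithin 0 ((K : Set ℝ) ∩ {0}ᶜ)) (nhds L) :=
        hL.mono_left (nhdsWithin_mono _ Set.inter_subset_right)
      have heq : (fun h : ℝ => (∑ i, A i * f (a i * h)) / h ^ m)
          =ᶠ[nhdsWithin 0 ((K : Set ℝ) ∩ {0}ᶜ)] fun _ => (Nat.factorial m : ℝ) := by
        filter_upwards [self_mem_nhdsWithin] with h hh
        obtain ⟨hK', hne⟩ := hh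
        rw [key p A a haK h, if_pos (show h ∈ K from hK'), hsum, mul_div_assoc,
          div_self (pow_ne_zero m hne), mul_one]
      exact tendsto_nhds_unique ((Filter.tendsto_congr' heq).mp hmono) tendsto_const_nhds
    have hL2 : L = 0 := by
      have hsub : ((K : Set ℝ)ᶜ : Set ℝ) ⊆ {0}ᶜ := by
        intro x hx
        simp only [Set.mem_compl_iff, Set.mem_singleton_iff]
        rintro rfl
        exact hx K.zero_mem
      have hmono : Tendsto (fun h : ℝ => (∑ i, A i * f (a i * h)) / h ^ m)
          (nhdsWithin 0 ((K : Set ℝ)ᶜ)) (nhds L) :=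
        hL.mono_left (nhdsWithin_mono _ hsub)
      have heq : (fun h : ℝ => (∑ i, A i * f (a i * h)) / h ^ m)
          =ᶠ[nhdsWithin 0 ((K : Set ℝ)ᶜ)] fun _ => (0 : ℝ) := by
        filter_upwards [self_mem_nhdsWithin] with h hh
        rw [key p A a haK h, if_neg (show h ∉ K from hh), zero_div]
      exact tendsto_nhds_unique ((Filter.tendsto_congr' heq).mp hmono) tendsto_const_nhds
    rw [hL2] at hL1
    exact (Nat.cast_ne_zero.mpr (Nat.factorial_ne_zero m)) hL1.symm
  · -- measurability
    have : f = Set.indicator (K : Set ℝ) fun x => x ^ m := by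
      funext x
      rw [hf]
      by_cases hx : x ∈ K
      · rw [if_pos hx, Set.indicator_of_mem hx]
      · rw [if_neg hx, Set.indicator_of_notMem hx]
    rw [this]
    exact (measurable_id.pow_const m).indicator hKc.measurableSet
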